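/- Let Λ be a relatively separated subset of a locally compact second-countable group G. Then the groupoid G(Λ) (the restriction of the transformation groupoid G ⋉ Ω*(Λ) to the transversal Ω₀(Λ)) is étale if and only if Λ is separated. -/

import Mathlib

open Pointwise Set MeasureTheory Filter Topology
open scoped ENNReal

set_option linter.unusedSectionVars false
set_option linter.unusedVariables false

variable {G : Type*} [TopologicalSpace G] [Group G] [IsTopologicalGroup G]

/-- The space `C(G)` of closed subsets of `G`. -/
def CF (G : Type*) [TopologicalSpace G] := {s : Set G // IsClosed s}

/-- The subbasis of the Chabauty–Fell topology on `C(G)`: the sets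
`O_K = {C | C ∩ K = ∅}` for `K` compact and `O^V = {C | C ∩ V ≠ ∅}` for `V` open. -/
def FellBasis (G : Type*) [TopologicalSpace G] : Set (Set (CF G)) :=
  {U | ∃ K : Set G, IsCompact K ∧ U = {C : CF G | C.1 ∩ K = ∅}} ∪
  {U | ∃ V : Set G, IsOpen V ∧ U = {C : CF G | (C.1 ∩ V).Nonempty}}

/-- The Chabauty–Fell topology. -/
instance : TopologicalSpace (CF G) := TopologicalSpace.generateFrom (FellBasis G)

/-- Left translation of a closed set. -/
noncomputable def CF.smul (x : G) (C : CF G) : CF G := ⟨x • C.1, C.2.smul x⟩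

/-- The hull of a point set `Λ`: the Chabauty–Fell closure of the set of left
translates of `Λ`. -/
def hullSet (Λ : Set G) : Set (CF G) := closure {C : CF G | ∃ x : G, C.1 = x • Λ}

/-- The punctured hull `Ω*(Λ)`: the hull minus the empty set. -/
def phull (Λ : Set G) : Set (CF G) := {C ∈ hullSet Λ | C.1.Nonempty}

/-- The transversal `Ω₀(Λ) = {P ∈ hull : e ∈ P}`. -/
def transv (Λ : Set G) : Set (CF G) := {C ∈ hullSet Λ | (1 : G) ∈ C.1}

/-- `Λ` is relatively separated: `sup_x |Λ ∩ xU| < ∞` for some nonempty open `U`. -/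
def RelSep (Λ : Set G) : Prop :=
  ∃ U : Set G, IsOpen U ∧ U.Nonempty ∧ ∃ ℓ : ℕ, ∀ x : G, (Λ ∩ x • U).encard ≤ ℓ

/-- `Λ` is separated: `|Λ ∩ xU| ≤ 1` for all `x` for some open identity neighborhood. -/
def Separated (Λ : Set G) : Prop :=
  ∃ U : Set G, IsOpen U ∧ (1 : G) ∈ U ∧ ∀ x : G, (Λ ∩ x • U).encard ≤ 1

lemma smul_inter_empty (x : G) (s K : Set G) : (x • s) ∩ K = ∅ ↔ s ∩ (x⁻¹ • K) = ∅ := by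
  have h : (x • s) ∩ K = x • (s ∩ x⁻¹ • K) := by
    rw [Set.smul_set_inter, smul_inv_smul]
  rw [h, Set.smul_set_eq_empty]

lemma smul_inter_nonempty (x : G) (s V : Set G) :
    ((x • s) ∩ V).Nonempty ↔ (s ∩ (x⁻¹ • V)).Nonempty := by
  have h : (x • s) ∩ V = x • (s ∩ x⁻¹ • V) := by
    rw [Set.smul_set_inter, smul_inv_smul]
  rw [h, Set.smul_set_nonempty]

/-- Left translation is continuous for the Chabauty–Fell topology. -/
lemma continuous_CFsmul (x : G) : Continuous (fun C : CF G => CF.smul x C) := by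
  apply continuous_generateFrom_iff.mpr
  rintro U (⟨K, hK, rfl⟩ | ⟨V, hV, rfl⟩)
  · have h : (fun C : CF G => CF.smul x C) ⁻¹' {C : CF G | C.1 ∩ K = ∅}
        = {C : CF G | C.1 ∩ (x⁻¹ • K) = ∅} := by
      ext C; exact smul_inter_empty x C.1 K
    rw [h]
    exact TopologicalSpace.isOpen_generateFrom_of_mem (Or.inl ⟨x⁻¹ • K, hK.smul x⁻¹, rfl⟩)
  · have h : (fun C : CF G => CF.smul x C) ⁻¹' {C : CF G | (C.1 ∩ V).Nonempty}
        = {C : CF G | (C.1 ∩ (x⁻¹ • V)).Nonempty} := by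
      ext C; exact smul_inter_nonempty x C.1 V
    rw [h]
    exact TopologicalSpace.isOpen_generateFrom_of_mem (Or.inr ⟨x⁻¹ • V, hV.smul x⁻¹, rfl⟩)

/-- The hull is invariant under left translations. -/
lemma smul_mem_hullSet {Λ : Set G} {C : CF G} (h : C ∈ hullSet Λ) (x : G) :
    CF.smul x C ∈ hullSet Λ := by
  refine map_mem_closure (continuous_CFsmul x) h ?_
  rintro D ⟨y, hy⟩
  exact ⟨x * y, by simp [CF.smul, hy, mul_smul]⟩

lemma one_mem_smul {G : Type*} [TopologicalSpace G] [Group G] [IsTopologicalGroup G]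
    {x : G} {s : Set G} (h : x⁻¹ ∈ s) : (1 : G) ∈ x • s :=
  Set.mem_smul_set.mpr ⟨x⁻¹, h, by simp⟩

/-- The groupoid `G(Λ)` of a point set: pairs `(x, P)` with `P` in the transversal and
`x⁻¹ ∈ P` (so that both `P` and `xP` contain the identity). -/
def Deloid {G : Type*} [TopologicalSpace G] [Group G] [IsTopologicalGroup G] (Λ : Set G) :
    Set (G × CF G) :=
  {p | p.2 ∈ transv Λ ∧ (p.1)⁻¹ ∈ p.2.1}

/-- The source map of the groupoid `G(Λ)`: `s(x, P) = P`. -/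
def deloidSource {G : Type*} [TopologicalSpace G] [Group G] [IsTopologicalGroup G] (Λ : Set G)
    (p : ↥(Deloid Λ)) : ↥(transv Λ) := ⟨p.1.2, p.2.1⟩

/-- The range map of the groupoid `G(Λ)`: `r(x, P) = xP`. -/
noncomputable def deloidRange {G : Type*} [TopologicalSpace G] [Group G] [IsTopologicalGroup G]
    (Λ : Set G) (p : ↥(Deloid Λ)) : ↥(transv Λ) :=
  ⟨CF.smul p.1.1 p.1.2, smul_mem_hullSet p.2.1.1 p.1.1, one_mem_smul p.2.2⟩

lemma isOpen_hit {V : Set G} (hV : IsOpen V) : IsOpen {C : CF G | (C.1 ∩ V).Nonempty} :=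
  TopologicalSpace.isOpen_generateFrom_of_mem (Or.inr ⟨V, hV, rfl⟩)

lemma isOpen_miss {K : Set G} (hK : IsCompact K) : IsOpen {C : CF G | C.1 ∩ K = ∅} :=
  TopologicalSpace.isOpen_generateFrom_of_mem (Or.inl ⟨K, hK, rfl⟩)

lemma compact_CF : IsCompact (Set.univ : Set (CF G)) := by
  rw [isCompact_iff_ultrafilter_le_nhds]
  intro F _
  set S : Set G := {x : G | ∀ W : Set G, IsOpen W → x ∈ W →
      {C : CF G | (C.1 ∩ W).Nonempty} ∈ F} with hS
  have hSc : IsClosed S := by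
    rw [← isOpen_compl_iff, isOpen_iff_forall_mem_open]
    intro x hx
    simp only [mem_compl_iff, hS, mem_setOf_eq, not_forall] at hx
    obtain ⟨W, hWo, hxW, hWF⟩ := hx
    exact ⟨W, fun y hy hyS => hWF (hyS W hWo hy), hWo, hxW⟩
  refine ⟨⟨S, hSc⟩, trivial, ?_⟩
  show ↑F ≤ @nhds (CF G) (TopologicalSpace.generateFrom (FellBasis G)) (⟨S, hSc⟩ : CF G)
  refine le_of_le_of_eq ?_ (TopologicalSpace.nhds_generateFrom (g := FellBasis G) (a := (⟨S, hSc⟩ : CF G))).symm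
  rw [le_iInf_iff]
  rintro s
  rw [le_iInf_iff]
  rintro ⟨hsmem, hsB⟩
  rw [le_principal_iff]
  rcases hsB with ⟨K, hK, rfl⟩ | ⟨V, hV, rfl⟩
  · -- S ∩ K = ∅
    have hk : ∀ k : G, k ∈ K → ∃ W : Set G, IsOpen W ∧ k ∈ W ∧
        {C : CF G | C.1 ∩ W = ∅} ∈ F := by
      intro k hkK
      have : k ∉ S := fun h => by
        have : (S ∩ K).Nonempty := ⟨k, h, hkK⟩
        rw [hsmem] at this; exact this.ne_empty rfl
      simp only [hS, mem_setOf_eq, not_forall] at this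
      obtain ⟨W, hWo, hkW, hWF⟩ := this
      refine ⟨W, hWo, hkW, ?_⟩
      have := (Ultrafilter.compl_mem_iff_notMem (f := F)).mpr hWF
      convert this using 1
      ext C
      simp [Set.not_nonempty_iff_eq_empty]
    choose W hWo hkW hWF using hk
    have hcov : K ⊆ ⋃ k : K, W k k.2 := fun k hkK =>
      mem_iUnion.mpr ⟨⟨k, hkK⟩, hkW k hkK⟩
    obtain ⟨t, ht⟩ := hK.elim_finite_subcover (fun k : K => W k k.2)
      (fun k => hWo k k.2) hcov
    have hmem : (⋂ k ∈ t, {C : CF G | C.1 ∩ W k k.2 = ∅}) ∈ F :=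
      (Filter.biInter_finset_mem t).mpr fun k _ => hWF k k.2
    refine Filter.mem_of_superset hmem ?_
    intro C hC
    simp only [mem_iInter, mem_setOf_eq] at hC ⊢
    rw [← Set.subset_empty_iff]
    intro y hy
    have := ht hy.2
    simp only [mem_iUnion] at this
    obtain ⟨k, hkt, hkW'⟩ := this
    have hyk : y ∈ C.1 ∩ W k k.2 := ⟨hy.1, hkW'⟩
    rw [hC k hkt] at hyk
    exact hyk
  · obtain ⟨x, hxS, hxV⟩ := hsmem
    exact hxS V hV hxV

lemma isClosed_oneMem [LocallyCompactSpace G] :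
    IsClosed {C : CF G | (1 : G) ∈ C.1} := by
  rw [← isOpen_compl_iff, isOpen_iff_forall_mem_open]
  intro C hC
  simp only [mem_compl_iff, mem_setOf_eq] at hC
  obtain ⟨K, hKn, hKsub, hKc⟩ := local_compact_nhds (n := C.1ᶜ)
    (C.2.isOpen_compl.mem_nhds hC)
  refine ⟨{C' : CF G | C'.1 ∩ K = ∅}, ?_, isOpen_miss hKc, ?_⟩
  · intro C' hC' h1
    have h1K : (1 : G) ∈ K := mem_of_mem_nhds hKn
    have : (1 : G) ∈ C'.1 ∩ K := ⟨h1, h1K⟩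
    rw [hC'] at this; exact this
  · show C.1 ∩ K = ∅
    rw [← Set.subset_empty_iff]
    intro y hy
    exact absurd hy.1 (hKsub hy.2)

lemma relSep_isClosed [T2Space G] {Λ : Set G} (hΛ : RelSep Λ) : IsClosed Λ := by
  obtain ⟨U, hUo, ⟨u₀, hu₀⟩, ℓ, hℓ⟩ := hΛ
  rw [← isOpen_compl_iff, isOpen_iff_forall_mem_open]
  intro z hz
  set N : Set G := (z * u₀⁻¹) • U with hN
  have hNo : IsOpen N := hUo.smul _
  have hzN : z ∈ N := ⟨u₀, hu₀, by simp only [smul_eq_mul, inv_mul_cancel_right]⟩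
  have hF : (Λ ∩ N).Finite := by
    have := hℓ (z * u₀⁻¹)
    rw [← Set.encard_lt_top_iff]
    exact lt_of_le_of_lt this (WithTop.coe_lt_top ℓ)
  refine ⟨N ∩ (Λ ∩ N)ᶜ, ?_, hNo.inter hF.isClosed.isOpen_compl, hzN, ?_⟩
  · intro y hy hyΛ
    exact hy.2 ⟨hyΛ, hy.1⟩
  · exact fun h => hz h.1

lemma hull_sep [T2Space G] {Λ U : Set G} (hUo : IsOpen U)
    (hU : ∀ x : G, (Λ ∩ x • U).encard ≤ 1) :
    ∀ C ∈ hullSet Λ, ∀ x : G, ((C : CF G).1 ∩ x • U).encard ≤ 1 := by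
  intro C hC x
  rw [Set.encard_le_one_iff]
  intro p q hp hq
  by_contra hpq
  obtain ⟨Vp, Vq, hVpo, hVqo, hpVp, hqVq, hdisj⟩ := t2_separation hpq
  set Op : Set (CF G) := {D : CF G | (D.1 ∩ (Vp ∩ x • U)).Nonempty}
  set Oq : Set (CF G) := {D : CF G | (D.1 ∩ (Vq ∩ x • U)).Nonempty}
  have hO : IsOpen (Op ∩ Oq) :=
    (isOpen_hit (hVpo.inter (hUo.smul x))).inter (isOpen_hit (hVqo.inter (hUo.smul x)))
  have hCO : C ∈ Op ∩ Oq := ⟨⟨p, hp.1, hpVp, hp.2⟩, ⟨q, hq.1, hqVq, hq.2⟩⟩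
  obtain ⟨D, hD1, y, hy⟩ := mem_closure_iff.mp hC _ hO hCO
  obtain ⟨⟨p', hp'D, hp'V, hp'U⟩, ⟨q', hq'D, hq'V, hq'U⟩⟩ := hD1
  rw [hy] at hp'D hq'D
  obtain ⟨lp, hlp, rfl⟩ := hp'D
  obtain ⟨lq, hlq, rfl⟩ := hq'D
  have hkey := Set.encard_le_one_iff.mp (hU (y⁻¹ * x)) lp lq
    ⟨hlp, by rw [mul_smul, Set.mem_smul_set_iff_inv_smul_mem, inv_inv]; exact hp'U⟩
    ⟨hlq, by rw [mul_smul, Set.mem_smul_set_iff_inv_smul_mem, inv_inv]; exact hq'U⟩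
  rw [hkey] at hp'V
  exact Set.disjoint_left.mp hdisj hp'V hq'V

lemma continuous_action [LocallyCompactSpace G] :
    Continuous (fun p : G × CF G => CF.smul p.1 p.2) := by
  apply continuous_generateFrom_iff.mpr
  rintro s (⟨K, hK, rfl⟩ | ⟨W, hW, rfl⟩)
  · rw [isOpen_iff_forall_mem_open]
    rintro ⟨x, C⟩ hxC
    simp only [mem_preimage, mem_setOf_eq, CF.smul] at hxC
    change (x • C.1) ∩ K = ∅ at hxC
    rw [smul_inter_empty] at hxC
    set f : G × G → G := fun q => q.1⁻¹ * q.2 with hf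
    have hfc : Continuous f := continuous_fst.inv.mul continuous_snd
    have hsub : ({x} : Set G) ×ˢ K ⊆ f ⁻¹' C.1ᶜ := by
      rintro ⟨a, k⟩ ⟨ha, hk⟩
      rw [mem_singleton_iff] at ha
      intro hmem
      have hx2 : x⁻¹ * k ∈ C.1 ∩ x⁻¹ • K := ⟨ha ▸ hmem, k, hk, rfl⟩
      rw [hxC] at hx2; exact hx2
    obtain ⟨A, O, hAo, hOo, hxA, hKO, hAO⟩ := generalized_tube_lemma
      isCompact_singleton hK (hfc.isOpen_preimage _ C.2.isOpen_compl) hsub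
    obtain ⟨M', hM'n, hM'A, hM'c⟩ := local_compact_nhds (hAo.mem_nhds (hxA rfl))
    set M : Set G := f '' (M' ×ˢ K) with hM
    have hMc : IsCompact M := (hM'c.prod hK).image hfc
    have hCM : C.1 ∩ M = ∅ := by
      rw [← Set.subset_empty_iff]
      rintro y ⟨hyC, ⟨a, k⟩, ⟨haM, hkK⟩, rfl⟩
      exact hAO (Set.mk_mem_prod (hM'A haM) (hKO hkK)) hyC
    refine ⟨(interior M') ×ˢ {D : CF G | D.1 ∩ M = ∅}, ?_, isOpen_interior.prod (isOpen_miss hMc), ⟨mem_interior_iff_mem_nhds.mpr hM'n, hCM⟩⟩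
    rintro ⟨x', C'⟩ ⟨hx', hC'⟩
    simp only [mem_preimage, mem_setOf_eq, CF.smul]
    change (x' • C'.1) ∩ K = ∅
    rw [smul_inter_empty, ← Set.subset_empty_iff]
    rintro y ⟨hyC', k, hkK, rfl⟩
    have : x'⁻¹ * k ∈ M := ⟨(x', k), ⟨interior_subset hx', hkK⟩, rfl⟩
    have h2 : x'⁻¹ * k ∈ C'.1 ∩ M := ⟨by simpa [smul_eq_mul] using hyC', this⟩
    rw [hC'] at h2; exact h2
  · rw [isOpen_iff_forall_mem_open]
    rintro ⟨x, C⟩ hxC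
    simp only [mem_preimage, mem_setOf_eq, CF.smul] at hxC
    change ((x • C.1) ∩ W).Nonempty at hxC
    rw [smul_inter_nonempty] at hxC
    obtain ⟨q, hqC, hqW⟩ := hxC
    have hqW' : x * q ∈ W := by
      rwa [Set.mem_smul_set_iff_inv_smul_mem, inv_inv, smul_eq_mul] at hqW
    have : IsOpen {p : G × G | p.1 * p.2 ∈ W} :=
      (continuous_fst.mul continuous_snd).isOpen_preimage _ hW
    obtain ⟨A, B, hAo, hBo, hxA, hqB, hAB⟩ := isOpen_prod_iff.mp this x q hqW'
    refine ⟨A ×ˢ {D : CF G | (D.1 ∩ B).Nonempty}, ?_, hAo.prod (isOpen_hit hBo), ⟨hxA, q, hqC, hqB⟩⟩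
    rintro ⟨x', C'⟩ ⟨hx', p', hp'C, hp'B⟩
    simp only [mem_preimage, mem_setOf_eq, CF.smul]
    change ((x' • C'.1) ∩ W).Nonempty
    rw [smul_inter_nonempty]
    refine ⟨p', hp'C, ?_⟩
    rw [Set.mem_smul_set_iff_inv_smul_mem, inv_inv, smul_eq_mul]
    exact hAB (Set.mk_mem_prod hx' hp'B)

open scoped Classical in
noncomputable def pick (Λ : Set G) (S : Set G) (Q : ↥(transv Λ)) : G :=
  if h : (Q.1.1 ∩ S).Nonempty then h.choose else 1

lemma pick_mem {Λ S : Set G} {Q : ↥(transv Λ)} (h : (Q.1.1 ∩ S).Nonempty) :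
    pick Λ S Q ∈ Q.1.1 ∩ S := by
  classical
  rw [pick]
  rw [dif_pos h]
  exact h.choose_spec

lemma pick_unique [T2Space G] {Λ U : Set G} (hUo : IsOpen U)
    (hU : ∀ x : G, (Λ ∩ x • U).encard ≤ 1) (x₀ : G) (Q : ↥(transv Λ)) {z : G}
    (hz : z ∈ Q.1.1 ∩ x₀ • U) : z = pick Λ (x₀ • U) Q := by
  have h : (Q.1.1 ∩ x₀ • U).Nonempty := ⟨z, hz⟩
  exact Set.encard_le_one_iff.mp (hull_sep hUo hU Q.1 Q.2.1 x₀) z _ hz (pick_mem h)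

lemma pick_continuousOn [T2Space G] {Λ U : Set G} (hUo : IsOpen U)
    (hU : ∀ x : G, (Λ ∩ x • U).encard ≤ 1) (x₀ : G) :
    ContinuousOn (pick Λ (x₀ • U)) {Q : ↥(transv Λ) | (Q.1.1 ∩ x₀ • U).Nonempty} := by
  intro Q₀ hQ₀
  rw [ContinuousWithinAt, tendsto_nhds]
  intro W hWo hW
  set O : Set ↥(transv Λ) :=
    (Subtype.val) ⁻¹' {C : CF G | (C.1 ∩ (W ∩ x₀ • U)).Nonempty} with hO
  have hOopen : IsOpen O := (isOpen_hit (hWo.inter (hUo.smul x₀))).preimage continuous_subtype_val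
  have hQ₀O : Q₀ ∈ O := by
    refine ⟨pick Λ (x₀ • U) Q₀, (pick_mem hQ₀).1, hW, (pick_mem hQ₀).2⟩
  rw [mem_nhdsWithin]
  refine ⟨O, hOopen, hQ₀O, ?_⟩
  rintro Q ⟨hQO, hQT⟩
  obtain ⟨q, hqQ, hqW, hqU⟩ := hQO
  have : q = pick Λ (x₀ • U) Q := pick_unique hUo hU x₀ Q ⟨hqQ, hqU⟩
  simp only [mem_preimage]
  rw [← this]
  exact hqW

lemma sep_source [T2Space G] {Λ U : Set G} (hUo : IsOpen U) (hU1 : (1 : G) ∈ U)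
    (hU : ∀ x : G, (Λ ∩ x • U).encard ≤ 1) : IsLocalHomeomorph (deloidSource Λ) := by
  intro a
  set x₀ : G := a.1.1 with hx₀
  set S : Set G := x₀⁻¹ • U with hSdef
  have hSo : IsOpen S := hUo.smul _
  classical
  refine ⟨{ toFun := deloidSource Λ
            invFun := fun Q => if h : (Q.1.1 ∩ S).Nonempty then
              ⟨((pick Λ S Q)⁻¹, Q.1), Q.2, by
                simpa using (pick_mem h).1⟩ else a
            source := {p : ↥(Deloid Λ) | p.1.1⁻¹ ∈ S}
            target := {Q : ↥(transv Λ) | (Q.1.1 ∩ S).Nonempty}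
            map_source' := by
              intro p hp
              exact ⟨p.1.1⁻¹, p.2.2, hp⟩
            map_target' := by
              intro Q hQ
              have hQ' : (Q.1.1 ∩ S).Nonempty := hQ
              simp only [mem_setOf_eq, dif_pos hQ', inv_inv]
              exact (pick_mem hQ').2
            left_inv' := by
              intro p hp
              have h : ((deloidSource Λ p).1.1 ∩ S).Nonempty := ⟨p.1.1⁻¹, p.2.2, hp⟩
              simp only [dif_pos h]
              have := pick_unique hUo hU x₀⁻¹ (deloidSource Λ p) ⟨p.2.2, hp⟩
              apply Subtype.ext
              apply Prod.ext
              · simp [hSdef, ← this]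
              · rfl
            right_inv' := by
              intro Q hQ
              have hQ' : (Q.1.1 ∩ S).Nonempty := hQ
              simp only [dif_pos hQ']
              exact Subtype.ext rfl
            open_source := by
              have : Continuous (fun p : ↥(Deloid Λ) => p.1.1⁻¹) :=
                (continuous_fst.comp continuous_subtype_val).inv
              exact hSo.preimage this
            open_target := (isOpen_hit hSo).preimage continuous_subtype_val
            continuousOn_toFun := by
              apply Continuous.continuousOn
              exact Continuous.subtype_mk (continuous_snd.comp continuous_subtype_val) _
            continuousOn_invFun := by
              rw [IsInducing.subtypeVal.continuousOn_iff]
              have hc : ContinuousOn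
                  (fun Q : ↥(transv Λ) => (((pick Λ S Q)⁻¹ : G), (Q.1 : CF G)))
                  {Q : ↥(transv Λ) | (Q.1.1 ∩ S).Nonempty} :=
                ContinuousOn.prodMk (pick_continuousOn hUo hU x₀⁻¹).inv
                  continuous_subtype_val.continuousOn
              apply hc.congr
              intro Q hQ
              have hQ' : (Q.1.1 ∩ S).Nonempty := hQ
              simp only [Function.comp, dif_pos hQ'] }, ?_, rfl⟩
  show a.1.1⁻¹ ∈ S
  exact ⟨1, hU1, by simp [hx₀]⟩

lemma sep_range [T2Space G] [LocallyCompactSpace G] {Λ U : Set G} (hUo : IsOpen U)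
    (hU1 : (1 : G) ∈ U) (hU : ∀ x : G, (Λ ∩ x • U).encard ≤ 1) :
    IsLocalHomeomorph (deloidRange Λ) := by
  intro a
  set x₀ : G := a.1.1 with hx₀
  set S : Set G := x₀ • U with hSdef
  have hSo : IsOpen S := hUo.smul _
  classical
  refine ⟨{ toFun := deloidRange Λ
            invFun := fun Q => if h : (Q.1.1 ∩ S).Nonempty then
              ⟨(pick Λ S Q, CF.smul (pick Λ S Q)⁻¹ Q.1),
                ⟨smul_mem_hullSet Q.2.1 _, by
                  show (1 : G) ∈ (pick Λ S Q)⁻¹ • Q.1.1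
                  rw [Set.mem_smul_set_iff_inv_smul_mem]
                  simpa using (pick_mem h).1⟩, by
                show (pick Λ S Q)⁻¹ ∈ (pick Λ S Q)⁻¹ • Q.1.1
                rw [Set.mem_smul_set_iff_inv_smul_mem]
                simpa using Q.2.2⟩ else a
            source := {p : ↥(Deloid Λ) | p.1.1 ∈ S}
            target := {Q : ↥(transv Λ) | (Q.1.1 ∩ S).Nonempty}
            map_source' := by
              intro p hp
              refine ⟨p.1.1, ?_, hp⟩
              show p.1.1 ∈ p.1.1 • p.1.2.1
              rw [Set.mem_smul_set_iff_inv_smul_mem]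
              simpa using p.2.1.2
            map_target' := by
              intro Q hQ
              have hQ' : (Q.1.1 ∩ S).Nonempty := hQ
              simp only [mem_setOf_eq, dif_pos hQ']
              exact (pick_mem hQ').2
            left_inv' := by
              intro p hp
              have hmem : p.1.1 ∈ (deloidRange Λ p).1.1 ∩ S := by
                refine ⟨?_, hp⟩
                show p.1.1 ∈ p.1.1 • p.1.2.1
                rw [Set.mem_smul_set_iff_inv_smul_mem]
                simpa using p.2.1.2
              have h : ((deloidRange Λ p).1.1 ∩ S).Nonempty := ⟨p.1.1, hmem⟩
              simp only [dif_pos h]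
              have hpick := pick_unique hUo hU x₀ (deloidRange Λ p) hmem
              apply Subtype.ext
              apply Prod.ext
              · simp [hSdef, ← hpick]
              · apply Subtype.ext
                show (pick Λ S (deloidRange Λ p))⁻¹ • (p.1.1 • p.1.2.1) = p.1.2.1
                rw [← hpick, inv_smul_smul]
            right_inv' := by
              intro Q hQ
              have hQ' : (Q.1.1 ∩ S).Nonempty := hQ
              simp only [dif_pos hQ']
              apply Subtype.ext
              apply Subtype.ext
              show pick Λ S Q • (pick Λ S Q)⁻¹ • Q.1.1 = Q.1.1
              rw [smul_inv_smul]
            open_source := by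
              have : Continuous (fun p : ↥(Deloid Λ) => p.1.1) :=
                continuous_fst.comp continuous_subtype_val
              exact hSo.preimage this
            open_target := (isOpen_hit hSo).preimage continuous_subtype_val
            continuousOn_toFun := by
              apply Continuous.continuousOn
              apply Continuous.subtype_mk
              exact continuous_action.comp
                ((continuous_fst.comp continuous_subtype_val).prodMk
                  (continuous_snd.comp continuous_subtype_val))
            continuousOn_invFun := by
              rw [IsInducing.subtypeVal.continuousOn_iff]
              have hc : ContinuousOn
                  (fun Q : ↥(transv Λ) =>
                    ((pick Λ S Q : G), CF.smul (pick Λ S Q)⁻¹ Q.1))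
                  {Q : ↥(transv Λ) | (Q.1.1 ∩ S).Nonempty} := by
                refine ContinuousOn.prodMk (pick_continuousOn hUo hU x₀) ?_
                exact continuous_action.comp_continuousOn
                  (ContinuousOn.prodMk (pick_continuousOn hUo hU x₀).inv
                    continuous_subtype_val.continuousOn)
              apply hc.congr
              intro Q hQ
              have hQ' : (Q.1.1 ∩ S).Nonempty := hQ
              simp only [Function.comp, dif_pos hQ'] }, ?_, rfl⟩
  show a.1.1 ∈ S
  exact ⟨1, hU1, by simp [hx₀]⟩

lemma homeo_sep [T2Space G] [LocallyCompactSpace G]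
    [SecondCountableTopology G] {Λ : Set G} (hΛ : RelSep Λ)
    (H : IsLocalHomeomorph (deloidSource Λ)) : Separated Λ := by
  have hclosed : IsClosed Λ := relSep_isClosed hΛ
  by_contra hns
  rw [Separated] at hns
  push_neg at hns
  obtain ⟨W, hW⟩ := (𝓝 (1 : G)).exists_antitone_basis
  have key : ∀ n : ℕ, ∃ t : G, t ≠ 1 ∧ t ∈ W n ∧ ∃ μ, μ ∈ Λ ∧ μ * t ∈ Λ := by
    intro n
    have hWn : W n ∈ 𝓝 (1 : G) := hW.mem n
    obtain ⟨V, hVo, hV1, hVV⟩ := exists_open_nhds_one_mul_subset hWn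
    set V' : Set G := V ∩ V⁻¹ with hV'
    have hV'o : IsOpen V' := hVo.inter hVo.inv
    have hV'1 : (1 : G) ∈ V' := ⟨hV1, by simpa using hV1⟩
    obtain ⟨x, hx⟩ := hns V' hV'o hV'1
    obtain ⟨lam, mu, hlam, hmu, hne⟩ := Set.one_lt_encard_iff.mp hx
    obtain ⟨u, hu, hxu⟩ := hlam.2
    obtain ⟨v, hv, hxv⟩ := hmu.2
    refine ⟨mu⁻¹ * lam, ?_, ?_, mu, hmu.1, by simpa using hlam.1⟩
    · simp only [ne_eq, inv_mul_eq_one]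
      exact fun h => hne h.symm
    · have : mu⁻¹ * lam = v⁻¹ * u := by
        rw [← hxu, ← hxv]; simp only [smul_eq_mul, mul_inv_rev]; group
      rw [this]
      exact hVV ⟨v⁻¹, by simpa using hv.2, u, hu.1, rfl⟩
  choose t ht1 htW mu hmu hmut using key
  set lam : ℕ → G := fun n => mu n * t n with hlam
  set Q : ℕ → CF G := fun n => ⟨(lam n)⁻¹ • Λ, hclosed.smul _⟩ with hQ
  have hQtr : ∀ n, Q n ∈ transv Λ := by
    intro n
    refine ⟨subset_closure ⟨(lam n)⁻¹, rfl⟩, ⟨lam n, hmut n, by simp⟩⟩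
  set 𝒰 : Ultrafilter ℕ := Ultrafilter.of atTop with h𝒰
  obtain ⟨Cinf, -, hle⟩ := isCompact_iff_ultrafilter_le_nhds.mp compact_CF (𝒰.map Q)
    (le_principal_iff.mpr univ_mem)
  have hQt : Tendsto Q ↑𝒰 (𝓝 Cinf) := hle
  have htrclosed : IsClosed (transv Λ) := by
    have : transv Λ = hullSet Λ ∩ {C : CF G | (1 : G) ∈ C.1} := rfl
    rw [this]
    exact isClosed_closure.inter isClosed_oneMem
  have hCinftr : Cinf ∈ transv Λ :=
    htrclosed.mem_of_tendsto hQt (Filter.Eventually.of_forall hQtr)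
  have htt : Tendsto t ↑𝒰 (𝓝 (1 : G)) :=
    (hW.tendsto htW).mono_left (Ultrafilter.of_le _)
  set aInf : ↥(Deloid Λ) := ⟨((1 : G), Cinf), hCinftr, by simpa using hCinftr.2⟩ with haInf
  set pn : ℕ → ↥(Deloid Λ) := fun n => ⟨(t n, Q n), hQtr n,
    ⟨mu n, hmu n, by simp only [hlam, smul_eq_mul, mul_inv_rev]; group⟩⟩ with hpn
  set qn : ℕ → ↥(Deloid Λ) := fun n => ⟨((1 : G), Q n), hQtr n, by
    simpa using (hQtr n).2⟩ with hqn
  obtain ⟨e, hae, hfe⟩ := H aInf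
  have htp : Tendsto pn ↑𝒰 (𝓝 aInf) := by
    rw [IsEmbedding.subtypeVal.tendsto_nhds_iff]
    exact htt.prodMk_nhds hQt
  have htq : Tendsto qn ↑𝒰 (𝓝 aInf) := by
    rw [IsEmbedding.subtypeVal.tendsto_nhds_iff]
    exact tendsto_const_nhds.prodMk_nhds hQt
  have hev : ∀ᶠ n in ↑𝒰, pn n ∈ e.source ∧ qn n ∈ e.source :=
    (htp.eventually (e.open_source.mem_nhds hae)).and
      (htq.eventually (e.open_source.mem_nhds hae))
  obtain ⟨n, hp, hq⟩ := hev.exists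
  have heq : e (pn n) = e (qn n) := by
    rw [← hfe]
    exact Subtype.ext rfl
  have := e.injOn hp hq heq
  have : t n = 1 := congrArg (fun z : ↥(Deloid Λ) => z.1.1) this
  exact ht1 n this

/-- For a relatively separated subset `Λ` of a lcsc group `G`, the groupoid `G(Λ)` is étale
(its source and range maps are local homeomorphisms) if and only if `Λ` is separated. -/
theorem statement6 {G : Type*} [TopologicalSpace G] [Group G] [IsTopologicalGroup G]
    [T2Space G] [LocallyCompactSpace G] [SecondCountableTopology G]
    (Λ : Set G) (hΛ : RelSep Λ) :
    (IsLocalHomeomorph (deloidSource Λ) ∧ IsLocalHomeomorph (deloidRange Λ)) ↔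
      Separated Λ := by
  constructor
  · rintro ⟨hs, -⟩
    exact homeo_sep hΛ hs
  · rintro ⟨U, hUo, hU1, hU⟩
    exact ⟨sep_source hUo hU1 hU, sep_range hUo hU1 hU⟩
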